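/- arXiv:2404.17131 — 3 statements merged into one kernel-verified Lean document; each statement's English description precedes it below -/
import Mathlib

section
/- Let T₁ ≥ T₂ ≥ ⋯ be a non-increasing sequence of positive contractions on H, S_n = T_n ⋯ T₁, and P the projection onto the fixed-point space of the strong limit T. If ξ ∈ H is such that the set {S_n ξ : n ∈ ℕ} is totally bounded, then ‖S_n ξ − Pξ‖ → 0. -/
open Filter Topology

noncomputable section

local notation "⟪" x ", " y "⟫" => @inner ℂ _ _ x y

variable {H : Type*} [NormedAddCommGroup H] [InnerProductSpace ℂ H] [CompleteSpace H]

open RCLike ContinuousLinearMap in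
private lemma sa_inner {A : H →L[ℂ] H} (h : IsSelfAdjoint A) (z y : H) :
    ⟪A z, y⟫ = ⟪z, A y⟫ := by
  conv_lhs => rw [← h.adjoint_eq]
  exact ContinuousLinearMap.adjoint_inner_left A y z

set_option maxHeartbeats 1000000 in
set_option synthInstance.maxHeartbeats 200000 in
open RCLike ContinuousLinearMap in
private lemma aux_sqrt_inner (A : H →L[ℂ] H) (hA : 0 ≤ A) (η : H) :
    re ⟪A η, η⟫ = ‖CFC.sqrt A η‖ ^ 2 := by
  set B := CFC.sqrt A with hBdef
  have hB : (0 : H →L[ℂ] H) ≤ B := CFC.sqrt_nonneg A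
  have hBB : B * B = A := CFC.sqrt_mul_sqrt_self A hA
  have hsa : IsSelfAdjoint B := .of_nonneg hB
  have h1 : ⟪A η, η⟫ = ⟪B η, B η⟫ := by
    rw [← hBB, ContinuousLinearMap.mul_apply, sa_inner hsa]
  rw [h1, ← inner_self_eq_norm_sq (𝕜 := ℂ)]

set_option maxHeartbeats 1000000 in
set_option synthInstance.maxHeartbeats 200000 in
open RCLike ContinuousLinearMap in
private lemma aux_inner_zero (A : H →L[ℂ] H) (hA : 0 ≤ A) (η : H)
    (h : re ⟪A η, η⟫ = 0) : A η = 0 := by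
  have h2 := aux_sqrt_inner A hA η
  rw [h] at h2
  set B := CFC.sqrt A with hBdef
  have hB0 : B η = 0 := by
    have : ‖B η‖ = 0 := by nlinarith [norm_nonneg (B η)]
    simpa using this
  have hBB : B * B = A := CFC.sqrt_mul_sqrt_self A hA
  calc A η = (B * B) η := by rw [hBB]
  _ = B (B η) := rfl
  _ = 0 := by rw [hB0, map_zero]

open RCLike ContinuousLinearMap in
private lemma aux_mono {A B : H →L[ℂ] H} (h : A ≤ B) (η : H) :
    re ⟪A η, η⟫ ≤ re ⟪B η, η⟫ := by
  have h2 := ((ContinuousLinearMap.le_def A B).mp h).inner_nonneg_left η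
  rw [ContinuousLinearMap.sub_apply, inner_sub_left] at h2
  have h3 := (Complex.le_def.mp h2).1
  simp only [Complex.zero_re, Complex.sub_re] at h3
  simp only [RCLike.re_to_complex]
  linarith

set_option maxHeartbeats 1000000 in
set_option synthInstance.maxHeartbeats 200000 in
open RCLike ContinuousLinearMap in
private lemma aux_sq_le (A : H →L[ℂ] H) (hA : 0 ≤ A) (hA1 : A ≤ 1) (η : H) :
    ‖A η‖ ^ 2 ≤ re ⟪A η, η⟫ := by
  set B := CFC.sqrt A with hBdef
  have hB : (0 : H →L[ℂ] H) ≤ B := CFC.sqrt_nonneg A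
  have hBB : B * B = A := CFC.sqrt_mul_sqrt_self A hA
  have hsa : IsSelfAdjoint B := .of_nonneg hB
  have hAn : ‖A‖ ≤ 1 := (CStarAlgebra.norm_le_one_iff_of_nonneg A hA).mpr hA1
  have hBn : ‖B‖ ≤ 1 := by
    have h1 : ‖B‖ * ‖B‖ = ‖A‖ := by
      rw [← hBB]; rw [← CStarRing.norm_star_mul_self, hsa.star_eq]
    nlinarith [norm_nonneg B]
  have hle : ‖A η‖ ≤ ‖B η‖ := by
    calc ‖A η‖ = ‖B (B η)‖ := by rw [← hBB]; rfl
    _ ≤ ‖B‖ * ‖B η‖ := le_opNorm _ _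
    _ ≤ 1 * ‖B η‖ := mul_le_mul_of_nonneg_right hBn (norm_nonneg _)
    _ = ‖B η‖ := one_mul _
  rw [aux_sqrt_inner A hA η]
  exact pow_le_pow_left₀ (norm_nonneg _) hle 2

set_option maxHeartbeats 1000000 in
set_option synthInstance.maxHeartbeats 200000 in
theorem stmt8 [TopologicalSpace.SeparableSpace H]
    (T : ℕ → H →L[ℂ] H) (hpos : ∀ n, 0 ≤ T n) (hcontr : ∀ n, T n ≤ 1)
    (hmono : ∀ n, T (n + 1) ≤ T n)
    (S : ℕ → H →L[ℂ] H) (hS0 : S 0 = T 0) (hSsucc : ∀ n, S (n + 1) = T (n + 1) ∘L S n)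
    (Tlim : H →L[ℂ] H) (hTlim : ∀ ξ : H, Tendsto (fun n => T n ξ) atTop (nhds (Tlim ξ)))
    (P : H →L[ℂ] H) (hP : IsIdempotentElem P) (hPsa : IsSelfAdjoint P)
    (hPfix : ∀ ξ : H, P ξ = ξ ↔ Tlim ξ = ξ)
    (ξ : H) (hξ : TotallyBounded (Set.range fun n => S n ξ)) :
    Tendsto (fun n => ‖S n ξ - P ξ‖) atTop (nhds 0) := by
  have hTmono : Antitone T := antitone_nat_of_succ_le hmono
  have hTsa : ∀ m, IsSelfAdjoint (T m) := fun m =>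
    (((T m).nonneg_iff_isPositive).mp (hpos m)).isSelfAdjoint
  -- upper bound for the quadratic form of T m
  have hup : ∀ m (ζ : H), RCLike.re ⟪T m ζ, ζ⟫ ≤ ‖ζ‖ ^ 2 := by
    intro m ζ
    have := aux_mono (hcontr m) ζ
    simpa [ContinuousLinearMap.one_apply, inner_self_eq_norm_sq, ← Complex.ofReal_pow, Complex.ofReal_re] using this
  -- a vector whose quadratic form is maximal is fixed
  have hfix_of_ge : ∀ m (ζ : H), ‖ζ‖ ^ 2 ≤ RCLike.re ⟪T m ζ, ζ⟫ → T m ζ = ζ := by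
    intro m ζ hge
    have heq : RCLike.re ⟪T m ζ, ζ⟫ = ‖ζ‖ ^ 2 := le_antisymm (hup m ζ) hge
    have h0 : RCLike.re ⟪(1 - T m) ζ, ζ⟫ = 0 := by
      rw [ContinuousLinearMap.sub_apply, ContinuousLinearMap.one_apply, inner_sub_left, map_sub,
        inner_self_eq_norm_sq, heq, sub_self]
    have h1 := aux_inner_zero (1 - T m) (sub_nonneg.mpr (hcontr m)) ζ h0
    rw [ContinuousLinearMap.sub_apply, ContinuousLinearMap.one_apply, sub_eq_zero] at h1
    exact h1.symm
  -- fixed vectors of Tlim are fixed by every T m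
  have hfix : ∀ m (ζ : H), Tlim ζ = ζ → T m ζ = ζ := by
    intro m ζ hζ
    have hcontRe : Continuous fun x : H => RCLike.re ⟪x, ζ⟫ :=
      RCLike.continuous_re.comp (continuous_id.inner continuous_const)
    have hlim : Tendsto (fun n => RCLike.re ⟪T n ζ, ζ⟫) atTop (𝓝 (RCLike.re ⟪Tlim ζ, ζ⟫)) :=
      (hcontRe.tendsto _).comp (hTlim ζ)
    have hev : ∀ᶠ n in atTop, RCLike.re ⟪T n ζ, ζ⟫ ≤ RCLike.re ⟪T m ζ, ζ⟫ := by
      filter_upwards [eventually_ge_atTop m] with n hn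
      exact aux_mono (hTmono hn) ζ
    have hge : ‖ζ‖ ^ 2 ≤ RCLike.re ⟪T m ζ, ζ⟫ := by
      have := le_of_tendsto hlim hev
      rwa [hζ, inner_self_eq_norm_sq] at this
    exact hfix_of_ge m ζ hge
  -- T m fixes the range of P
  have hTP : ∀ m (x : H), T m (P x) = P x := by
    intro m x
    refine hfix m (P x) ((hPfix (P x)).mp ?_)
    have := congrArg (fun A : H →L[ℂ] H => A x) hP
    simpa [ContinuousLinearMap.mul_apply] using this
  -- P absorbs T m on the left
  have hPT : ∀ m (x : H), P (T m x) = P x := by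
    intro m x
    have key : ∀ y, ⟪P (T m x), y⟫ = ⟪P x, y⟫ := by
      intro y
      rw [sa_inner hPsa, sa_inner (hTsa m), hTP m y, ← sa_inner hPsa]
    rw [← sub_eq_zero, ← inner_self_eq_zero (𝕜 := ℂ), inner_sub_left, key, sub_self]
  -- hence P (S n ξ) = P ξ
  have hPS : ∀ n, P (S n ξ) = P ξ := by
    intro n
    induction n with
    | zero => rw [hS0]; exact hPT 0 ξ
    | succ n ih => rw [hSsucc n, ContinuousLinearMap.comp_apply, hPT, ih]
  -- the norms decrease
  have hTnorm : ∀ m, ‖T m‖ ≤ 1 := fun m =>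
    (CStarAlgebra.norm_le_one_iff_of_nonneg (T m) (hpos m)).mpr (hcontr m)
  set a : ℕ → ℝ := fun n => ‖S n ξ‖ with ha
  have hanti : Antitone a := by
    refine antitone_nat_of_succ_le fun n => ?_
    show ‖S (n + 1) ξ‖ ≤ ‖S n ξ‖
    rw [hSsucc n, ContinuousLinearMap.comp_apply]
    calc ‖T (n + 1) (S n ξ)‖ ≤ ‖T (n + 1)‖ * ‖S n ξ‖ := ContinuousLinearMap.le_opNorm _ _
    _ ≤ 1 * ‖S n ξ‖ := mul_le_mul_of_nonneg_right (hTnorm _) (norm_nonneg _)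
    _ = ‖S n ξ‖ := one_mul _
  have hbdd : BddBelow (Set.range a) := ⟨0, by rintro x ⟨n, rfl⟩; exact norm_nonneg _⟩
  set c : ℝ := ⨅ n, a n with hcdef
  have hc : Tendsto a atTop (𝓝 c) := tendsto_atTop_ciInf hanti hbdd
  -- every subsequential limit equals P ξ
  have hkey : ∀ (φ : ℕ → ℕ), Tendsto φ atTop atTop → ∀ η : H,
      Tendsto (fun k => S (φ k) ξ) atTop (𝓝 η) → η = P ξ := by
    intro φ hφ η hη
    have hnormη : ‖η‖ = c := by
      have h1 : Tendsto (fun k => a (φ k)) atTop (𝓝 c) := hc.comp hφ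
      have h2 : Tendsto (fun k => ‖S (φ k) ξ‖) atTop (𝓝 ‖η‖) := hη.norm
      exact tendsto_nhds_unique h2 h1
    have hfixη : ∀ m, T m η = η := by
      intro m
      refine hfix_of_ge m η ?_
      have hev : ∀ᶠ k in atTop,
          a (φ k + 1) ^ 2 ≤ RCLike.re ⟪T m (S (φ k) ξ), S (φ k) ξ⟫ := by
        filter_upwards [hφ.eventually_ge_atTop m] with k hk
        have e1 : a (φ k + 1) = ‖T (φ k + 1) (S (φ k) ξ)‖ := by
          show ‖S (φ k + 1) ξ‖ = _
          rw [hSsucc (φ k), ContinuousLinearMap.comp_apply]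
        rw [e1]
        calc ‖T (φ k + 1) (S (φ k) ξ)‖ ^ 2
            ≤ RCLike.re ⟪T (φ k + 1) (S (φ k) ξ), S (φ k) ξ⟫ :=
          aux_sq_le _ (hpos _) (hcontr _) _
        _ ≤ RCLike.re ⟪T m (S (φ k) ξ), S (φ k) ξ⟫ :=
          aux_mono (hTmono (le_trans hk (Nat.le_succ _))) _
      have hφ1 : Tendsto (fun k => φ k + 1) atTop atTop :=
        tendsto_atTop_mono (fun k => Nat.le_succ _) hφ
      have hl1 : Tendsto (fun k => a (φ k + 1) ^ 2) atTop (𝓝 (c ^ 2)) := by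
        simpa [Function.comp_def] using (hc.comp hφ1).pow 2
      have hl2 : Tendsto (fun k => RCLike.re ⟪T m (S (φ k) ξ), S (φ k) ξ⟫) atTop
          (𝓝 (RCLike.re ⟪T m η, η⟫)) := by
        have hcont : Continuous fun x : H => RCLike.re ⟪T m x, x⟫ :=
          RCLike.continuous_re.comp ((T m).continuous.inner continuous_id)
        exact (hcont.tendsto η).comp hη
      have := le_of_tendsto_of_tendsto hl1 hl2 hev
      rwa [hnormη]
    have hTlimη : Tlim η = η := by
      refine tendsto_nhds_unique (hTlim η) ?_
      simp only [hfixη]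
      exact tendsto_const_nhds
    have hPη : P η = η := (hPfix η).mpr hTlimη
    have h1 : Tendsto (fun k => P (S (φ k) ξ)) atTop (𝓝 (P η)) :=
      (P.continuous.tendsto η).comp hη
    have h2 : Tendsto (fun k => P (S (φ k) ξ)) atTop (𝓝 (P ξ)) := by
      simp only [hPS]
      exact tendsto_const_nhds
    have h3 : P η = P ξ := tendsto_nhds_unique h1 h2
    rw [← hPη, h3]
  -- conclude by compactness
  have hK : IsCompact (closure (Set.range fun n => S n ξ)) :=
    TotallyBounded.isCompact_of_isClosed hξ.closure isClosed_closure
  have hmain : Tendsto (fun n => S n ξ) atTop (𝓝 (P ξ)) := by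
    apply tendsto_of_subseq_tendsto
    intro ns hns
    obtain ⟨η, _, φ, hφmono, hφtend⟩ := hK.tendsto_subseq (x := fun k => S (ns k) ξ)
      (fun k => subset_closure (Set.mem_range_self _))
    have heta : η = P ξ := by
      refine hkey (ns ∘ φ) (hns.comp hφmono.tendsto_atTop) η ?_
      simpa [Function.comp_def] using hφtend
    refine ⟨φ, ?_⟩
    rw [← heta]
    simpa [Function.comp_def] using hφtend
  exact tendsto_iff_norm_sub_tendsto_zero.mp hmain

end
end

section
/- Let T₁ ≥ T₂ ≥ ⋯ be a non-increasing sequence of positive contractions on a Hilbert space H and S_n = T_n ⋯ T₁. Then for every ξ ∈ H and every k ∈ ℕ, ‖S_{n+k} ξ − S_n ξ‖ → 0 as n → ∞. -/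
open Filter Topology

noncomputable section

local notation "⟪" x ", " y "⟫" => @inner ℂ _ _ x y

variable {H : Type*} [NormedAddCommGroup H] [InnerProductSpace ℂ H] [CompleteSpace H]

open ContinuousLinearMap RCLike

lemma mysq_le (A : H →L[ℂ] H) (h0 : 0 ≤ A) (h1 : A ≤ 1) : A^2 ≤ A := by
  simpa using CStarAlgebra.pow_antitone h0 h1 (show 1 ≤ 2 by norm_num)

lemma rmono {A B : H →L[ℂ] H} (h : A ≤ B) (x : H) :
    re ⟪A x, x⟫ ≤ re ⟪B x, x⟫ := by
  have := ((le_def A B).mp h).inner_nonneg_left x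
  simp only [sub_apply, inner_sub_left, map_sub] at this
  have h2 := (RCLike.le_iff_re_im.mp this).1
  simp only [map_zero, map_sub] at h2
  linarith [this]

lemma rsq {A : H →L[ℂ] H} (hA : 0 ≤ A) (x : H) :
    re ⟪(A^2) x, x⟫ = ‖A x‖^2 := by
  have hsa := ((nonneg_iff_isPositive A).mp hA).isSelfAdjoint
  have hsym := (isSelfAdjoint_iff_isSymmetric.mp hsa)
  have h : ⟪(A^2) x, x⟫ = ⟪A x, A x⟫ := by
    rw [pow_two]
    exact hsym (A x) x
  rw [h]
  exact_mod_cast congrArg re (inner_self_eq_norm_sq_to_K (𝕜 := ℂ) (A x))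

lemma key (A : H →L[ℂ] H) (h0 : 0 ≤ A) (h1 : A ≤ 1) (x : H) :
    ‖A x - x‖^2 + ‖A x‖^2 ≤ ‖x‖^2 := by
  have h0' : (0 : H →L[ℂ] H) ≤ 1 - A := by simpa [le_def] using h1
  have h1' : (1 - A : H →L[ℂ] H) ≤ 1 := by simpa [le_def] using h0
  have e1 : ‖A x - x‖^2 = re ⟪((1 - A)^2 : H →L[ℂ] H) x, x⟫ := by
    rw [rsq h0']
    congr 1
    simp [norm_sub_rev]
  have e2 : ‖A x‖^2 = re ⟪(A^2) x, x⟫ := (rsq h0 x).symm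
  have m1 := rmono (mysq_le _ h0' h1') x
  have m2 := rmono (mysq_le _ h0 h1) x
  have e3 : re ⟪(1 - A) x, x⟫ + re ⟪A x, x⟫ = ‖x‖^2 := by
    have : re ⟪(1 - A) x, x⟫ + re ⟪A x, x⟫ = re ⟪x, x⟫ := by
      simp only [sub_apply, one_apply, inner_sub_left, map_sub, ContinuousLinearMap.one_apply]
      ring
    rw [this]
    exact_mod_cast congrArg re (inner_self_eq_norm_sq_to_K (𝕜 := ℂ) x)
  linarith

theorem stmt9 (T : ℕ → H →L[ℂ] H) (hpos : ∀ n, 0 ≤ T n) (hcontr : ∀ n, T n ≤ 1)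
    (hmono : ∀ n, T (n + 1) ≤ T n)
    (S : ℕ → H →L[ℂ] H) (hS0 : S 0 = T 0) (hSsucc : ∀ n, S (n + 1) = T (n + 1) ∘L S n) :
    ∀ (ξ : H) (k : ℕ), Tendsto (fun n => ‖S (n + k) ξ - S n ξ‖) atTop (nhds 0) := by
  intro ξ k
  set b : ℕ → ℝ := fun n => ‖S n ξ‖^2 with hbdef
  have hkey : ∀ n, ‖S (n+1) ξ - S n ξ‖^2 + b (n+1) ≤ b n := by
    intro n
    have h := key (T (n+1)) (hpos _) (hcontr _) (S n ξ)
    have hs : S (n+1) ξ = T (n+1) (S n ξ) := by rw [hSsucc n]; rfl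
    simpa [hbdef, hs] using h
  have hanti : Antitone b := antitone_nat_of_succ_le fun n => by
    nlinarith [hkey n, sq_nonneg ‖S (n+1) ξ - S n ξ‖]
  have hbdd : BddBelow (Set.range b) := ⟨0, by rintro x ⟨n, rfl⟩; exact sq_nonneg _⟩
  have hb : Tendsto b atTop (nhds (⨅ n, b n)) := tendsto_atTop_ciInf hanti hbdd
  have hdiff : Tendsto (fun n => b n - b (n+1)) atTop (nhds 0) := by
    simpa using hb.sub (hb.comp (tendsto_add_atTop_nat 1))
  have h1 : Tendsto (fun n => ‖S (n+1) ξ - S n ξ‖) atTop (nhds 0) := by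
    have hsq : Tendsto (fun n => Real.sqrt (b n - b (n+1))) atTop (nhds 0) := by
      simpa using hdiff.sqrt
    refine squeeze_zero (fun n => norm_nonneg _) (fun n => ?_) hsq
    have := hkey n
    have h0 : ‖S (n+1) ξ - S n ξ‖^2 ≤ b n - b (n+1) := by linarith
    calc ‖S (n+1) ξ - S n ξ‖ = Real.sqrt (‖S (n+1) ξ - S n ξ‖^2) := by
            rw [Real.sqrt_sq (norm_nonneg _)]
      _ ≤ Real.sqrt (b n - b (n+1)) := Real.sqrt_le_sqrt h0
  induction k with
  | zero => simpa using (tendsto_const_nhds : Tendsto (fun _ : ℕ => (0:ℝ)) atTop (nhds 0))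
  | succ k ih =>
    have h2 : Tendsto (fun n => ‖S (n+k+1) ξ - S (n+k) ξ‖) atTop (nhds 0) :=
      h1.comp (tendsto_add_atTop_nat k)
    refine squeeze_zero (fun n => norm_nonneg _) (fun n => ?_) (by simpa using h2.add ih)
    calc ‖S (n+(k+1)) ξ - S n ξ‖
        ≤ ‖S (n+(k+1)) ξ - S (n+k) ξ‖ + ‖S (n+k) ξ - S n ξ‖ :=
          norm_sub_le_norm_sub_add_norm_sub _ _ _
      _ = ‖S (n+k+1) ξ - S (n+k) ξ‖ + ‖S (n+k) ξ - S n ξ‖ := by ring_nf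
end
end

section
/- Let T₁ ≥ T₂ ≥ ⋯ be a non-increasing sequence of positive contractions on a separable Hilbert space H with strong limit T, and suppose T_{n₀} is compact for some n₀. Then S_n = T_n ⋯ T₁ converges strongly to the projection P onto the fixed-point space of T. -/
open Filter Topology

noncomputable section

local notation "⟪" x ", " y "⟫" => @inner ℂ _ _ x y

variable {H : Type*} [NormedAddCommGroup H] [InnerProductSpace ℂ H] [CompleteSpace H]

open ContinuousLinearMap Pointwise

set_option maxHeartbeats 1000000
set_option synthInstance.maxHeartbeats 1000000

lemma qf_nonneg {A : H →L[ℂ] H} (h : 0 ≤ A) (x : H) : 0 ≤ RCLike.re ⟪A x, x⟫ :=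
  ((ContinuousLinearMap.nonneg_iff_isPositive A).mp h).re_inner_nonneg_left x

lemma sa_of_nonneg {A : H →L[ℂ] H} (h : 0 ≤ A) : IsSelfAdjoint A :=
  ((ContinuousLinearMap.nonneg_iff_isPositive A).mp h).isSelfAdjoint

lemma sa_inner_move {A : H →L[ℂ] H} (h : IsSelfAdjoint A) (x y : H) :
    ⟪A x, y⟫ = ⟪x, A y⟫ := by
  conv_lhs => rw [← h.adjoint_eq]
  exact adjoint_inner_left A y x

lemma qf_mono {A B : H →L[ℂ] H} (h : A ≤ B) (x : H) :
    RCLike.re ⟪A x, x⟫ ≤ RCLike.re ⟪B x, x⟫ := by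
  have := qf_nonneg (sub_nonneg.mpr h) x
  rw [sub_apply, inner_sub_left, map_sub] at this
  linarith

lemma qf_le_norm {A : H →L[ℂ] H} (x : H) : RCLike.re ⟪A x, x⟫ ≤ ‖A x‖ * ‖x‖ :=
  (RCLike.re_le_norm _).trans (norm_inner_le_norm _ _)

lemma key_ineq {A : H →L[ℂ] H} (h : 0 ≤ A) (x : H) :
    ‖A x‖ ^ 2 ≤ ‖A‖ * RCLike.re ⟪A x, x⟫ := by
  set s := CFC.sqrt A with hs_def
  have hs : 0 ≤ s := CFC.sqrt_nonneg A
  have hss : s * s = A := CFC.sqrt_mul_sqrt_self A h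
  have hsa : IsSelfAdjoint s := IsSelfAdjoint.of_nonneg hs
  have h1 : ‖A x‖ ≤ ‖s‖ * ‖s x‖ := by
    have : A x = s (s x) := by rw [← hss]; rfl
    rw [this]; exact le_opNorm s (s x)
  have h2 : ‖s x‖ ^ 2 = RCLike.re ⟪A x, x⟫ := by
    rw [← inner_self_eq_norm_sq (𝕜 := ℂ) (s x), sa_inner_move hsa x (s x)]
    have : s (s x) = A x := by rw [← hss]; rfl
    rw [this, inner_re_symm]
  have h3 : ‖s‖ ^ 2 = ‖A‖ := by
    have h4 := CStarRing.norm_star_mul_self (x := s)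
    rw [hsa.star_eq, hss] at h4
    rw [h4]; ring
  calc ‖A x‖ ^ 2 ≤ (‖s‖ * ‖s x‖) ^ 2 := by
        apply pow_le_pow_left₀ (norm_nonneg _) h1 2
    _ = ‖s‖ ^ 2 * ‖s x‖ ^ 2 := by ring
    _ = ‖A‖ * RCLike.re ⟪A x, x⟫ := by rw [h2, h3]

lemma mul_self_le_self {A : H →L[ℂ] H} (h0 : 0 ≤ A) (h1 : A ≤ 1) : A * A ≤ A := by
  set s := CFC.sqrt A with hs_def
  have hs : 0 ≤ s := CFC.sqrt_nonneg A
  have hss : s * s = A := CFC.sqrt_mul_sqrt_self A h0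
  have hsa : IsSelfAdjoint s := IsSelfAdjoint.of_nonneg hs
  have := star_left_conjugate_le_conjugate h1 s
  rw [hsa.star_eq, mul_one, hss] at this
  calc A * A = s * A * s := by rw [← hss]; noncomm_ring
    _ ≤ A := this

lemma qf_sq_le {A : H →L[ℂ] H} (h0 : 0 ≤ A) (h1 : A ≤ 1) (x : H) :
    ‖A x‖ ^ 2 ≤ RCLike.re ⟪A x, x⟫ := by
  have hsa : IsSelfAdjoint A := sa_of_nonneg h0
  have h2 : (⟪A (A x), x⟫ : ℂ) = ⟪A x, A x⟫ := by
    rw [sa_inner_move hsa (A x) x]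
  have h3 := qf_mono (mul_self_le_self h0 h1) x
  rw [ContinuousLinearMap.mul_apply, h2] at h3
  rw [← inner_self_eq_norm_sq (𝕜 := ℂ) (A x)]
  exact h3

lemma contraction_of_le_one {A : H →L[ℂ] H} (h0 : 0 ≤ A) (h1 : A ≤ 1) (x : H) :
    ‖A x‖ ≤ ‖x‖ := by
  have h2 := (qf_sq_le h0 h1 x).trans (qf_le_norm x)
  rcases eq_or_lt_of_le (norm_nonneg (A x)) with h | h
  · rw [← h]; exact norm_nonneg x
  · nlinarith

lemma apply_eq_of_qf_eq {A : H →L[ℂ] H} (h0 : 0 ≤ A) (x : H)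
    (hx : RCLike.re ⟪A x, x⟫ ≤ 0) : A x = 0 := by
  have h1 := key_ineq h0 x
  have hq := qf_nonneg h0 x
  have hq0 : RCLike.re ⟪A x, x⟫ = 0 := le_antisymm hx hq
  rw [hq0, mul_zero] at h1
  have h3 : ‖A x‖ = 0 := by nlinarith [norm_nonneg (A x)]
  exact norm_eq_zero.mp h3

lemma le_of_qf {A B : H →L[ℂ] H} (hA : IsSelfAdjoint A) (hB : IsSelfAdjoint B)
    (h : ∀ x, RCLike.re ⟪A x, x⟫ ≤ RCLike.re ⟪B x, x⟫) : A ≤ B := by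
  rw [ContinuousLinearMap.le_def, ContinuousLinearMap.isPositive_def']
  refine ⟨hB.sub hA, fun x => ?_⟩
  rw [ContinuousLinearMap.reApplyInnerSelf_apply, sub_apply, inner_sub_left, map_sub]
  have := h x
  linarith

lemma qf_tendsto {T : ℕ → H →L[ℂ] H} {L : H →L[ℂ] H}
    (hTlim : ∀ x, Tendsto (fun n => T n x) atTop (𝓝 (L x))) (x : H) :
    Tendsto (fun n => RCLike.re ⟪T n x, x⟫) atTop (𝓝 (RCLike.re ⟪L x, x⟫)) := by
  have h1 : Tendsto (fun n => (⟪T n x, x⟫ : ℂ)) atTop (𝓝 ⟪L x, x⟫) :=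
    (hTlim x).inner tendsto_const_nhds
  exact (RCLike.continuous_re.tendsto _).comp h1

lemma sa_of_strong_limit {T : ℕ → H →L[ℂ] H} {L : H →L[ℂ] H}
    (hsa : ∀ n, IsSelfAdjoint (T n))
    (hTlim : ∀ x, Tendsto (fun n => T n x) atTop (𝓝 (L x))) : IsSelfAdjoint L := by
  rw [ContinuousLinearMap.isSelfAdjoint_iff_isSymmetric]
  intro x y
  have h1 : Tendsto (fun n => (⟪T n x, y⟫ : ℂ)) atTop (𝓝 ⟪L x, y⟫) :=
    (hTlim x).inner tendsto_const_nhds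
  have h2 : Tendsto (fun n => (⟪T n x, y⟫ : ℂ)) atTop (𝓝 ⟪x, L y⟫) := by
    have : ∀ n, (⟪T n x, y⟫ : ℂ) = ⟪x, T n y⟫ := fun n => sa_inner_move (hsa n) x y
    simp_rw [this]
    exact tendsto_const_nhds.inner (hTlim y)
  exact tendsto_nhds_unique h1 h2

lemma compact_image {B : H →L[ℂ] H} (hB : IsCompactOperator B) :
    ∃ K : Set H, IsCompact K ∧ ∀ x : H, ‖x‖ ≤ 1 → B x ∈ K := by
  obtain ⟨K, hK, hKmem⟩ := hB
  obtain ⟨r, hr, hball⟩ := Metric.mem_nhds_iff.mp hKmem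
  refine ⟨(2 / r) • K, hK.smul _, fun x hx => ?_⟩
  have h1 : B ((r / 2 : ℝ) • x) ∈ K := by
    apply hball
    rw [Metric.mem_ball, dist_zero_right, norm_smul]
    have : ‖(r / 2 : ℝ)‖ = r / 2 := by
      rw [Real.norm_eq_abs, abs_of_pos (by linarith)]
    rw [this]
    nlinarith
  have h2 : B x = (2 / r : ℝ) • B ((r / 2 : ℝ) • x) := by
    rw [map_smul_of_tower, smul_smul]
    have : (2 / r) * (r / 2) = 1 := by field_simp
    rw [this, one_smul]
  rw [h2]
  exact Set.smul_mem_smul_set h1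

lemma norm_comp_tendsto {D : ℕ → H →L[ℂ] H} {C : ℝ} (hC : 0 ≤ C)
    (hbound : ∀ n, ‖D n‖ ≤ C)
    (hstrong : ∀ x : H, Tendsto (fun n => D n x) atTop (𝓝 0))
    {B : H →L[ℂ] H} (hB : IsCompactOperator B) :
    Tendsto (fun n => ‖D n ∘L B‖) atTop (𝓝 0) := by
  obtain ⟨K, hK, hKmem⟩ := compact_image hB
  rw [Metric.tendsto_atTop]
  intro ε hε
  set ε' := ε / (C + 2) with hε'_def
  have hε' : 0 < ε' := by positivity
  obtain ⟨t, htfin, htcov⟩ := Metric.totallyBounded_iff.mp hK.totallyBounded ε' hε'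
  have hev : ∀ᶠ n in atTop, ∀ y ∈ t, ‖D n y‖ < ε' := by
    rw [htfin.eventually_all]
    intro y _
    have := (hstrong y).norm
    rw [norm_zero] at this
    exact this.eventually_lt_const hε' |>.mono (fun n h => by simpa using h)
  rw [eventually_atTop] at hev
  obtain ⟨N, hN⟩ := hev
  refine ⟨N, fun n hn => ?_⟩
  rw [Real.dist_eq, sub_zero, abs_of_nonneg (norm_nonneg _)]
  have hbnd : ‖D n ∘L B‖ ≤ (C + 1) * ε' := by
    apply opNorm_le_bound _ (by positivity)
    intro x
    rcases eq_or_ne x 0 with rfl | hx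
    · simp
    · have hxpos : 0 < ‖x‖ := norm_pos_iff.mpr hx
      have hu : ‖(‖x‖⁻¹ : ℝ) • x‖ ≤ 1 := by
        rw [norm_smul, Real.norm_eq_abs, abs_of_nonneg (by positivity)]
        rw [inv_mul_cancel₀ (ne_of_gt hxpos)]
      have hz := hKmem _ hu
      obtain ⟨y, hyt, hy⟩ := Set.mem_iUnion₂.mp (htcov hz)
      rw [Metric.mem_ball, dist_eq_norm] at hy
      set z := B ((‖x‖⁻¹ : ℝ) • x)
      have h1 : ‖D n z‖ ≤ C * ε' + ε' := by
        have hzz : z - y + y = z := by abel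
        calc ‖D n z‖ = ‖D n (z - y + y)‖ := by rw [hzz]
          _ = ‖D n (z - y) + D n y‖ := by rw [map_add]
          _ ≤ ‖D n (z - y)‖ + ‖D n y‖ := norm_add_le _ _
          _ ≤ C * ε' + ε' := by
              gcongr
              · calc ‖D n (z - y)‖ ≤ ‖D n‖ * ‖z - y‖ := le_opNorm _ _
                  _ ≤ C * ε' := by
                    apply mul_le_mul (hbound n) hy.le (norm_nonneg _) hC
              · exact (hN n hn y hyt).le
      have h2 : (D n ∘L B) x = (‖x‖ : ℝ) • D n z := by
        rw [comp_apply]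
        have hxx : x = (‖x‖ : ℝ) • ((‖x‖⁻¹ : ℝ) • x) := by
          rw [smul_smul, mul_inv_cancel₀ (ne_of_gt hxpos), one_smul]
        conv_lhs => rw [hxx]
        rw [map_smul_of_tower, map_smul_of_tower]
      rw [h2, norm_smul, Real.norm_eq_abs, abs_of_nonneg hxpos.le, mul_comm]
      have : C * ε' + ε' = (C + 1) * ε' := by ring
      rw [← this]
      exact mul_le_mul_of_nonneg_right h1 hxpos.le
  have hlt : (C + 1) * ε' < ε := by
    rw [hε'_def, mul_div_assoc']
    rw [div_lt_iff₀ (by linarith : (0:ℝ) < C + 2)]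
    nlinarith
  linarith
theorem stmt17 [TopologicalSpace.SeparableSpace H]
    (T : ℕ → H →L[ℂ] H) (hpos : ∀ n, 0 ≤ T n) (hcontr : ∀ n, T n ≤ 1)
    (hmono : ∀ n, T (n + 1) ≤ T n) (n₀ : ℕ) (hcompact : IsCompactOperator (T n₀))
    (S : ℕ → H →L[ℂ] H) (hS0 : S 0 = T 0) (hSsucc : ∀ n, S (n + 1) = T (n + 1) ∘L S n)
    (Tlim : H →L[ℂ] H) (hTlim : ∀ ξ : H, Tendsto (fun n => T n ξ) atTop (nhds (Tlim ξ)))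
    (P : H →L[ℂ] H) (hP : IsIdempotentElem P) (hPsa : IsSelfAdjoint P)
    (hPfix : ∀ ξ : H, P ξ = ξ ↔ Tlim ξ = ξ) :
    ∀ ξ : H, Tendsto (fun n => S n ξ) atTop (nhds (P ξ)) := by
  have hTsa : ∀ n, IsSelfAdjoint (T n) := fun n => sa_of_nonneg (hpos n)
  have hanti : Antitone T := antitone_nat_of_succ_le hmono
  have hLsa : IsSelfAdjoint Tlim := sa_of_strong_limit hTsa hTlim
  have hLle : ∀ n, Tlim ≤ T n := by
    intro n
    apply le_of_qf hLsa (hTsa n)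
    intro x
    apply le_of_tendsto (qf_tendsto hTlim x)
    filter_upwards [eventually_ge_atTop n] with m hm
    exact qf_mono (hanti hm) x
  have hLpos : (0 : H →L[ℂ] H) ≤ Tlim := by
    apply le_of_qf ((IsSelfAdjoint.zero _)) hLsa
    intro x
    simp only [zero_apply, inner_zero_left, map_zero]
    apply ge_of_tendsto (qf_tendsto hTlim x)
    filter_upwards with m
    exact qf_nonneg (hpos m) x
  have hLle1 : Tlim ≤ 1 := by
    apply le_of_qf hLsa ((IsSelfAdjoint.one _))
    intro x
    apply le_of_tendsto (qf_tendsto hTlim x)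
    filter_upwards with m
    exact qf_mono (hcontr m) x
  -- fixed points are fixed by every T n
  have hfix : ∀ n (x : H), Tlim x = x → T n x = x := by
    intro n x hx
    have h0 : (0 : H →L[ℂ] H) ≤ 1 - T n := sub_nonneg.mpr (hcontr n)
    have h1 := qf_mono (hLle n) x
    rw [hx] at h1
    have hq : RCLike.re ⟪(1 - T n) x, x⟫ ≤ 0 := by
      rw [sub_apply, ContinuousLinearMap.one_apply, inner_sub_left, map_sub]
      linarith
    have h2 := apply_eq_of_qf_eq h0 x hq
    rw [sub_apply, ContinuousLinearMap.one_apply] at h2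
    exact (sub_eq_zero.mp h2).symm
  -- kernel of P is invariant
  have hker : ∀ n (x : H), P x = 0 → P (T n x) = 0 := by
    intro n x hx
    set w := P (T n x) with hw
    have hPw : P w = w := by
      rw [hw, ← ContinuousLinearMap.mul_apply, hP]
    have hTw : T n w = w := hfix n w ((hPfix w).mp hPw)
    have h1 : (⟪w, w⟫ : ℂ) = 0 := by
      calc (⟪w, w⟫ : ℂ) = ⟪P (T n x), w⟫ := rfl
        _ = ⟪T n x, P w⟫ := sa_inner_move hPsa (T n x) w
        _ = ⟪T n x, w⟫ := by rw [hPw]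
        _ = ⟪x, T n w⟫ := sa_inner_move (hTsa n) x w
        _ = ⟪x, w⟫ := by rw [hTw]
        _ = ⟪x, P (T n x)⟫ := rfl
        _ = ⟪P x, T n x⟫ := (sa_inner_move hPsa x (T n x)).symm
        _ = 0 := by rw [hx, inner_zero_left]
    exact inner_self_eq_zero.mp h1
  -- spectral gap on ker P
  have hgap : ∃ r : ℝ, 0 ≤ r ∧ r < 1 ∧ ∀ x : H, P x = 0 →
      RCLike.re ⟪Tlim x, x⟫ ≤ r * ‖x‖ ^ 2 := by
    by_contra hcon
    push_neg at hcon
    have hcon' : ∀ k : ℕ, ∃ u : H, ‖u‖ = 1 ∧ P u = 0 ∧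
        1 - 1 / (k + 1 : ℝ) < RCLike.re ⟪Tlim u, u⟫ := by
      intro k
      have hrk0 : (0:ℝ) ≤ 1 - 1 / (k + 1 : ℝ) := by
        have h1 : 1 / (k + 1 : ℝ) ≤ 1 := by
          rw [div_le_one (by positivity)]
          simp
        linarith
      have hrk1 : (1 - 1 / (k + 1 : ℝ)) < 1 := by
        have : (0:ℝ) < 1 / (k + 1 : ℝ) := by positivity
        linarith
      obtain ⟨x, hxk, hxq⟩ := hcon _ hrk0 hrk1
      have hx0 : x ≠ 0 := by
        intro h
        rw [h] at hxq
        simp at hxq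
      have hxn : (0:ℝ) < ‖x‖ := norm_pos_iff.mpr hx0
      refine ⟨(‖x‖⁻¹ : ℝ) • x, ?_, ?_, ?_⟩
      · rw [norm_smul, Real.norm_eq_abs, abs_of_pos (by positivity),
          inv_mul_cancel₀ (ne_of_gt hxn)]
      · rw [map_smul_of_tower, hxk, smul_zero]
      · have hsc : RCLike.re ⟪Tlim ((‖x‖⁻¹ : ℝ) • x), (‖x‖⁻¹ : ℝ) • x⟫
            = ‖x‖⁻¹ * (‖x‖⁻¹ * RCLike.re ⟪Tlim x, x⟫) := by
          rw [map_smul_of_tower]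
          rw [RCLike.real_smul_eq_coe_smul (K := ℂ), RCLike.real_smul_eq_coe_smul (K := ℂ)]
          rw [inner_smul_left, inner_smul_right, RCLike.conj_ofReal]
          rw [← mul_assoc, ← RCLike.ofReal_mul, RCLike.re_ofReal_mul]
          ring
        rw [hsc]
        have h2 : (1 - 1 / (k + 1 : ℝ)) * ‖x‖ ^ 2 < RCLike.re ⟪Tlim x, x⟫ := hxq
        have h3 : ‖x‖⁻¹ * ‖x‖⁻¹ * ‖x‖ ^ 2 = 1 := by
          field_simp
        nlinarith [mul_pos (inv_pos.mpr hxn) (inv_pos.mpr hxn)]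
    choose u hu1 huP huq using hcon'
    -- the defect tends to zero
    have hq0 : ∀ k, 0 ≤ RCLike.re ⟪(1 - Tlim) (u k), u k⟫ :=
      fun k => qf_nonneg (sub_nonneg.mpr hLle1) (u k)
    have hqval : ∀ k, RCLike.re ⟪(1 - Tlim) (u k), u k⟫
        = 1 - RCLike.re ⟪Tlim (u k), u k⟫ := by
      intro k
      rw [sub_apply, ContinuousLinearMap.one_apply, inner_sub_left, map_sub]
      rw [inner_self_eq_norm_sq (𝕜 := ℂ) (u k), hu1 k]
      norm_num
    have hqtend : Tendsto (fun k => RCLike.re ⟪(1 - Tlim) (u k), u k⟫) atTop (𝓝 0) := by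
      apply squeeze_zero (g := fun k : ℕ => 1 / ((k : ℝ) + 1)) hq0
      · intro k
        rw [hqval k]
        have := huq k
        linarith
      · exact tendsto_one_div_add_atTop_nhds_zero_nat
    -- both defects tend to zero in norm
    have hdef : ∀ (A : H →L[ℂ] H), (0 : H →L[ℂ] H) ≤ A →
        (∀ k, RCLike.re ⟪A (u k), u k⟫ ≤ RCLike.re ⟪(1 - Tlim) (u k), u k⟫) →
        Tendsto (fun k => A (u k)) atTop (𝓝 0) := by
      intro A hA hAle
      rw [tendsto_zero_iff_norm_tendsto_zero]
      have hsq : Tendsto (fun k => ‖A (u k)‖ ^ 2) atTop (𝓝 0) := by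
        apply squeeze_zero (fun k => by positivity)
        · intro k
          exact (key_ineq hA (u k)).trans
            (mul_le_mul_of_nonneg_left (hAle k) (norm_nonneg A))
        · have := hqtend.const_mul ‖A‖
          simpa using this
      have : Tendsto (fun k => Real.sqrt (‖A (u k)‖ ^ 2)) atTop (𝓝 (Real.sqrt 0)) :=
        (Real.continuous_sqrt.tendsto 0).comp hsq
      simpa [Real.sqrt_sq (norm_nonneg _)] using this
    have hdefL : Tendsto (fun k => (1 - Tlim) (u k)) atTop (𝓝 0) :=
      hdef _ (sub_nonneg.mpr hLle1) (fun k => le_refl _)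
    have hdefT : Tendsto (fun k => (1 - T n₀) (u k)) atTop (𝓝 0) := by
      apply hdef _ (sub_nonneg.mpr (hcontr n₀))
      intro k
      exact qf_mono (sub_le_sub_left (hLle n₀) 1) (u k)
    -- compactness: extract convergent subsequence
    obtain ⟨K, hK, hKmem⟩ := compact_image hcompact
    have hvK : ∀ k, T n₀ (u k) ∈ K := fun k => hKmem (u k) (le_of_eq (hu1 k))
    obtain ⟨a, _, φ, hφ, hconv⟩ := hK.tendsto_subseq hvK
    have huconv : Tendsto (fun k => u (φ k)) atTop (𝓝 a) := by
      have h1 : ∀ k, u (φ k) = (1 - T n₀) (u (φ k)) + T n₀ (u (φ k)) := by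
        intro k
        rw [sub_apply, ContinuousLinearMap.one_apply]
        abel
      have h2 : Tendsto (fun k => (1 - T n₀) (u (φ k)) + T n₀ (u (φ k))) atTop (𝓝 (0 + a)) :=
        (hdefT.comp hφ.tendsto_atTop).add hconv
      rw [zero_add] at h2
      exact h2.congr (fun k => (h1 k).symm)
    have hna : ‖a‖ = 1 := by
      have h1 : Tendsto (fun k => ‖u (φ k)‖) atTop (𝓝 ‖a‖) := huconv.norm
      have h2 : Tendsto (fun k => ‖u (φ k)‖) atTop (𝓝 1) := by
        simp_rw [fun k => hu1 (φ k)]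
        exact tendsto_const_nhds
      exact tendsto_nhds_unique h1 h2
    have hPa : P a = 0 := by
      have h1 : Tendsto (fun k => P (u (φ k))) atTop (𝓝 (P a)) :=
        (P.continuous.tendsto a).comp huconv
      have h2 : Tendsto (fun k => P (u (φ k))) atTop (𝓝 0) := by
        simp_rw [fun k => huP (φ k)]
        exact tendsto_const_nhds
      exact tendsto_nhds_unique h1 h2
    have hLa : Tlim a = a := by
      have h1 : Tendsto (fun k => (1 - Tlim) (u (φ k))) atTop (𝓝 ((1 - Tlim) a)) :=
        ((1 - Tlim).continuous.tendsto a).comp huconv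
      have h2 : Tendsto (fun k => (1 - Tlim) (u (φ k))) atTop (𝓝 0) :=
        hdefL.comp hφ.tendsto_atTop
      have h3 := tendsto_nhds_unique h1 h2
      rw [sub_apply, ContinuousLinearMap.one_apply] at h3
      exact (sub_eq_zero.mp h3).symm
    have : a = 0 := by rw [← hPa, (hPfix a).mpr hLa]
    rw [this, norm_zero] at hna
    norm_num at hna
  -- norm convergence ‖T n - Tlim‖ → 0
  obtain ⟨r, hr0, hr1, hrgap⟩ := hgap
  have hcontr' : ∀ n (x : H), ‖T n x‖ ≤ ‖x‖ :=
    fun n => contraction_of_le_one (hpos n) (hcontr n)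
  have hLcontr : ∀ x : H, ‖Tlim x‖ ≤ ‖x‖ := contraction_of_le_one hLpos hLle1
  set D : ℕ → H →L[ℂ] H := fun n => T n - Tlim with hD_def
  have hD0 : ∀ n, (0 : H →L[ℂ] H) ≤ D n := fun n => sub_nonneg.mpr (hLle n)
  have hDsa : ∀ n, IsSelfAdjoint (D n) := fun n => sa_of_nonneg (hD0 n)
  have hDbd : ∀ n, ‖D n‖ ≤ 2 := by
    intro n
    apply opNorm_le_bound _ (by norm_num)
    intro x
    rw [sub_apply]
    calc ‖T n x - Tlim x‖ ≤ ‖T n x‖ + ‖Tlim x‖ := norm_sub_le _ _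
      _ ≤ 2 * ‖x‖ := by have := hcontr' n x; have := hLcontr x; linarith
  have hDstrong : ∀ x : H, Tendsto (fun n => D n x) atTop (𝓝 0) := by
    intro x
    have h1 : Tendsto (fun n => T n x - Tlim x) atTop (𝓝 (Tlim x - Tlim x)) :=
      (hTlim x).sub tendsto_const_nhds
    rw [sub_self] at h1
    exact h1.congr (fun n => by rw [sub_apply])
  have h6a : Tendsto (fun n => ‖D n ∘L T n₀‖) atTop (𝓝 0) :=
    norm_comp_tendsto (by norm_num) hDbd hDstrong hcompact
  have hadj : ∀ n, ‖T n₀ ∘L D n‖ = ‖D n ∘L T n₀‖ := by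
    intro n
    conv_lhs => rw [← (hTsa n₀).adjoint_eq, ← (hDsa n).adjoint_eq, ← adjoint_comp]
    exact (ContinuousLinearMap.adjoint : (H →L[ℂ] H) ≃ₗᵢ⋆[ℂ] (H →L[ℂ] H)).norm_map _
  have hDkey : ∀ n, n₀ ≤ n → ‖D n‖ ^ 2 ≤ 2 * Real.sqrt ‖D n ∘L T n₀‖ := by
    intro n hn
    have hβ0 : (0:ℝ) ≤ ‖D n ∘L T n₀‖ := norm_nonneg _
    set β := ‖D n ∘L T n₀‖ with hβ_def
    have hDle : D n ≤ T n₀ := by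
      have h1 : T n - Tlim ≤ T n := sub_le_self _ hLpos
      exact h1.trans (hanti hn)
    have hmain : ∀ x : H, ‖(D n * D n) x‖ ≤ (2 * Real.sqrt β) * ‖x‖ := by
      intro x
      have h1 : ‖D n (D n x)‖ ^ 2 ≤ ‖D n‖ * RCLike.re ⟪D n (D n x), D n x⟫ :=
        key_ineq (hD0 n) (D n x)
      have h2 : RCLike.re ⟪D n (D n x), D n x⟫ ≤ RCLike.re ⟪T n₀ (D n x), D n x⟫ :=
        qf_mono hDle (D n x)
      have h3 : RCLike.re ⟪T n₀ (D n x), D n x⟫ ≤ ‖T n₀ (D n x)‖ * ‖D n x‖ :=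
        qf_le_norm (D n x)
      have h4 : ‖T n₀ (D n x)‖ ≤ β * ‖x‖ := by
        have : T n₀ (D n x) = (T n₀ ∘L D n) x := rfl
        rw [this]
        calc ‖(T n₀ ∘L D n) x‖ ≤ ‖T n₀ ∘L D n‖ * ‖x‖ := le_opNorm _ _
          _ = β * ‖x‖ := by rw [hadj n]
      have h5 : ‖D n x‖ ≤ 2 * ‖x‖ := by
        calc ‖D n x‖ ≤ ‖D n‖ * ‖x‖ := le_opNorm _ _
          _ ≤ 2 * ‖x‖ := by
            apply mul_le_mul_of_nonneg_right (hDbd n) (norm_nonneg x)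
      have h6 : ‖D n (D n x)‖ ^ 2 ≤ 4 * β * ‖x‖ ^ 2 := by
        have hd2 : ‖D n‖ * RCLike.re ⟪D n (D n x), D n x⟫ ≤ 2 * (β * ‖x‖ * (2 * ‖x‖)) := by
          have hQ0 : 0 ≤ RCLike.re ⟪D n (D n x), D n x⟫ := qf_nonneg (hD0 n) (D n x)
          have hQb : RCLike.re ⟪D n (D n x), D n x⟫ ≤ β * ‖x‖ * (2 * ‖x‖) := by
            calc RCLike.re ⟪D n (D n x), D n x⟫ ≤ ‖T n₀ (D n x)‖ * ‖D n x‖ := h2.trans h3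
              _ ≤ β * ‖x‖ * (2 * ‖x‖) := by
                  apply mul_le_mul h4 h5 (norm_nonneg _) (by positivity)
          nlinarith [hDbd n, norm_nonneg (D n)]
        calc ‖D n (D n x)‖ ^ 2 ≤ ‖D n‖ * RCLike.re ⟪D n (D n x), D n x⟫ := h1
          _ ≤ 2 * (β * ‖x‖ * (2 * ‖x‖)) := hd2
          _ = 4 * β * ‖x‖ ^ 2 := by ring
      have h7 : (D n * D n) x = D n (D n x) := rfl
      rw [h7]
      have hrhs : ((2 * Real.sqrt β) * ‖x‖) ^ 2 = 4 * β * ‖x‖ ^ 2 := by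
        rw [mul_pow, mul_pow, Real.sq_sqrt hβ0]
        ring
      nlinarith [norm_nonneg (D n (D n x)), Real.sqrt_nonneg β, norm_nonneg x,
        mul_nonneg (mul_nonneg (by norm_num : (0:ℝ) ≤ 2) (Real.sqrt_nonneg β)) (norm_nonneg x)]
    have hop : ‖D n * D n‖ ≤ 2 * Real.sqrt β := by
      apply opNorm_le_bound _ (by positivity) hmain
    have hCstar : ‖D n * D n‖ = ‖D n‖ ^ 2 := by
      have h4 := CStarRing.norm_star_mul_self (x := D n)
      rw [(hDsa n).star_eq] at h4
      rw [h4]; ring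
    rw [← hCstar]
    exact hop
  have hDnorm : Tendsto (fun n => ‖D n‖) atTop (𝓝 0) := by
    have hsq : Tendsto (fun n => 2 * Real.sqrt ‖D n ∘L T n₀‖) atTop (𝓝 (2 * Real.sqrt 0)) :=
      (((Real.continuous_sqrt.tendsto 0).comp h6a).const_mul 2)
    rw [Real.sqrt_zero, mul_zero] at hsq
    have hsq2 : Tendsto (fun n => ‖D n‖ ^ 2) atTop (𝓝 0) := by
      apply squeeze_zero' (Eventually.of_forall (fun n => by positivity))
      · filter_upwards [eventually_ge_atTop n₀] with n hn
        exact hDkey n hn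
      · exact hsq
    have : Tendsto (fun n => Real.sqrt (‖D n‖ ^ 2)) atTop (𝓝 (Real.sqrt 0)) :=
      (Real.continuous_sqrt.tendsto 0).comp hsq2
    rw [Real.sqrt_zero] at this
    exact this.congr (fun n => Real.sqrt_sq (norm_nonneg _))
  -- final assembly
  intro ξ
  -- the fixed part
  have hSfix : ∀ n, S n (P ξ) = P ξ := by
    have hfixP : ∀ m, T m (P ξ) = P ξ := by
      intro m
      apply hfix m
      apply (hPfix (P ξ)).mp
      rw [← ContinuousLinearMap.mul_apply, hP]
    intro n
    induction n with
    | zero => rw [hS0]; exact hfixP 0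
    | succ k ih => rw [hSsucc k, comp_apply, ih]; exact hfixP (k + 1)
  -- the null part
  set η := ξ - P ξ with hη_def
  have hPη : P η = 0 := by
    rw [hη_def, map_sub, ← ContinuousLinearMap.mul_apply, hP, sub_self]
  have hSker : ∀ n, P (S n η) = 0 := by
    intro n
    induction n with
    | zero => rw [hS0]; exact hker 0 η hPη
    | succ k ih => rw [hSsucc k, comp_apply]; exact hker (k + 1) _ ih
  set c : ℝ := Real.sqrt ((1 + r) / 2) with hc_def
  have hc0 : 0 ≤ c := Real.sqrt_nonneg _
  have hc1 : c < 1 := by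
    have h2 := Real.sqrt_lt_sqrt (by linarith : (0:ℝ) ≤ (1 + r) / 2)
      (by linarith : (1 + r) / 2 < 1)
    rwa [Real.sqrt_one] at h2
  obtain ⟨N, hN⟩ := (Metric.tendsto_atTop.mp hDnorm ((1 - r) / 2) (by linarith)).imp
    (fun N h => h)
  have hNc : ∀ n, N ≤ n → ∀ x : H, P x = 0 → ‖T n x‖ ≤ c * ‖x‖ := by
    intro n hn x hx
    have hDn : ‖D n‖ < (1 - r) / 2 := by
      have := hN n hn
      rwa [Real.dist_eq, sub_zero, abs_of_nonneg (norm_nonneg _)] at this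
    have h1 : RCLike.re ⟪T n x, x⟫ ≤ ((1 + r) / 2) * ‖x‖ ^ 2 := by
      have h2 : RCLike.re ⟪Tlim x, x⟫ ≤ r * ‖x‖ ^ 2 := hrgap x hx
      have h3 : RCLike.re ⟪D n x, x⟫ ≤ ((1 - r) / 2) * ‖x‖ ^ 2 := by
        calc RCLike.re ⟪D n x, x⟫ ≤ ‖D n x‖ * ‖x‖ := qf_le_norm x
          _ ≤ (‖D n‖ * ‖x‖) * ‖x‖ := by
              apply mul_le_mul_of_nonneg_right (le_opNorm _ _) (norm_nonneg x)
          _ ≤ ((1 - r) / 2) * ‖x‖ ^ 2 := by nlinarith [norm_nonneg x, norm_nonneg (D n)]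
      have h4 : RCLike.re ⟪T n x, x⟫ = RCLike.re ⟪Tlim x, x⟫ + RCLike.re ⟪D n x, x⟫ := by
        rw [hD_def]
        simp only [sub_apply, inner_sub_left, map_sub]
        ring
      rw [h4]
      linarith
    have h5 : ‖T n x‖ ^ 2 ≤ ((1 + r) / 2) * ‖x‖ ^ 2 :=
      (qf_sq_le (hpos n) (hcontr n) x).trans h1
    have h6 : (c * ‖x‖) ^ 2 = ((1 + r) / 2) * ‖x‖ ^ 2 := by
      rw [mul_pow, hc_def, Real.sq_sqrt (by linarith)]
    nlinarith [norm_nonneg (T n x), norm_nonneg x, mul_nonneg hc0 (norm_nonneg x)]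
  have hgeo : ∀ k : ℕ, ‖S (N + k) η‖ ≤ c ^ k * ‖S N η‖ := by
    intro k
    induction k with
    | zero => simp
    | succ j ih =>
      have h1 : S (N + (j + 1)) η = T (N + j + 1) (S (N + j) η) := by
        rw [show N + (j + 1) = (N + j) + 1 by ring, hSsucc (N + j), comp_apply]
      rw [h1]
      calc ‖T (N + j + 1) (S (N + j) η)‖ ≤ c * ‖S (N + j) η‖ :=
            hNc (N + j + 1) (by omega) _ (hSker (N + j))
        _ ≤ c * (c ^ j * ‖S N η‖) := by
            apply mul_le_mul_of_nonneg_left ih hc0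
        _ = c ^ (j + 1) * ‖S N η‖ := by ring
  have hSnull : Tendsto (fun n => S n η) atTop (𝓝 0) := by
    rw [tendsto_zero_iff_norm_tendsto_zero]
    have hb : Tendsto (fun k : ℕ => c ^ k * ‖S N η‖) atTop (𝓝 0) := by
      have := (tendsto_pow_atTop_nhds_zero_of_lt_one hc0 hc1).mul_const ‖S N η‖
      rwa [zero_mul] at this
    have hcomp : Tendsto (fun n : ℕ => c ^ (n - N) * ‖S N η‖) atTop (𝓝 0) :=
      hb.comp (tendsto_sub_atTop_nat N)
    apply squeeze_zero' (g := fun n : ℕ => c ^ (n - N) * ‖S N η‖)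
      (Eventually.of_forall (fun n => norm_nonneg _))
    · filter_upwards [eventually_ge_atTop N] with n hn
      have := hgeo (n - N)
      rwa [show N + (n - N) = n by omega] at this
    · exact hcomp
  -- conclude
  have hdecomp : ∀ n, S n ξ = P ξ + S n η := by
    intro n
    have : ξ = P ξ + η := by rw [hη_def]; abel
    conv_lhs => rw [this]
    rw [map_add, hSfix n]
  have hfinal : Tendsto (fun n => P ξ + S n η) atTop (𝓝 (P ξ + 0)) :=
    tendsto_const_nhds.add hSnull
  rw [add_zero] at hfinal
  exact hfinal.congr (fun n => (hdecomp n).symm)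
end
end
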